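/- Let R be a commutative ring with exactly n maximal ideals, where n is a positive integer. Then {1, …, n} ⊆ Ω(R); that is, for every integer 1 ≤ k ≤ n there exists a proper ideal I of R with ω_R(I) = k. -/

import Mathlib

/-- A proper ideal `I` is `n`-absorbing if whenever a product of `n + 1` elements
lies in `I`, the product of some `n` of them (in increasing index order) lies in `I`. -/
def IsNAbsorbing {R : Type*} [CommRing R] (n : ℕ) (I : Ideal R) : Prop :=
  ∀ x : Fin (n + 1) → R, (∏ i, x i) ∈ I →
    ∃ ι : Fin n → Fin (n + 1), StrictMono ι ∧ (∏ j, x (ι j)) ∈ I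

/-- `omegaR I` is the smallest positive integer `n` such that `I` is `n`-absorbing,
and `∞` if no such `n` exists. -/
noncomputable def omegaR {R : Type*} [CommRing R] (I : Ideal R) : ℕ∞ :=
  sInf {w : ℕ∞ | ∃ n : ℕ, 0 < n ∧ w = (n : ℕ∞) ∧ IsNAbsorbing n I}

open Finset in
/-- Reformulation: `n`-absorbing iff some index can be erased. -/
lemma isNAbsorbing_iff_erase {R : Type*} [CommRing R] (n : ℕ) (I : Ideal R) :
    IsNAbsorbing n I ↔ ∀ x : Fin (n + 1) → R, (∏ i, x i) ∈ I →
      ∃ p : Fin (n + 1), (∏ i ∈ univ.erase p, x i) ∈ I := by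
  constructor
  · intro h x hx
    obtain ⟨ι, hι, hprod⟩ := h x hx
    have hinj : Function.Injective ι := hι.injective
    set T : Finset (Fin (n + 1)) := univ.image ι with hT
    have hcard : T.card = n := by
      rw [hT, card_image_of_injective _ hinj, card_univ, Fintype.card_fin]
    have hne : T ≠ univ := by
      intro h'
      have := hcard
      rw [h', card_univ, Fintype.card_fin] at this
      omega
    obtain ⟨p, hp⟩ : ∃ p, p ∉ T := by
      by_contra h'
      push_neg at h'
      exact hne (eq_univ_of_forall h')
    refine ⟨p, ?_⟩
    have hTe : T = univ.erase p := by
      apply eq_of_subset_of_card_le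
      · intro j hj
        exact mem_erase.2 ⟨fun hjp => hp (hjp ▸ hj), mem_univ j⟩
      · rw [card_erase_of_mem (mem_univ p), card_univ, Fintype.card_fin, hcard]
        omega
    rw [← hTe, hT, prod_image (fun a _ b _ hab => hinj hab)]
    exact hprod
  · intro h x hx
    obtain ⟨p, hp⟩ := h x hx
    refine ⟨p.succAbove, Fin.strictMono_succAbove p, ?_⟩
    have himg : univ.image p.succAbove = univ.erase p := by
      apply eq_of_subset_of_card_le
      · intro j hj
        obtain ⟨i, _, rfl⟩ := mem_image.1 hj
        exact mem_erase.2 ⟨Fin.succAbove_ne p i, mem_univ _⟩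
      · rw [card_erase_of_mem (mem_univ p), card_univ,
          card_image_of_injective _ (Fin.succAbove_right_injective),
          Fintype.card_fin]
        simp
    rw [← prod_image (f := x) (fun a _ b _ hab => Fin.succAbove_right_injective hab), himg]
    exact hp

/-- If `R` has exactly `n` maximal ideals, then every `k` with `1 ≤ k ≤ n` is the
`ω`-value of some proper ideal of `R`. -/
theorem mem_omega_of_card_maximal {R : Type*} [CommRing R] (n : ℕ) (hn : 0 < n)
    (hfin : {I : Ideal R | I.IsMaximal}.Finite)
    (hcard : {I : Ideal R | I.IsMaximal}.ncard = n) :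
    ∀ k : ℕ, 1 ≤ k → k ≤ n → ∃ I : Ideal R, I ≠ ⊤ ∧ omegaR I = (k : ℕ∞) := by
  open Finset in
  classical
  intro k hk1 hkn
  -- pick `k` distinct maximal ideals
  have hT : hfin.toFinset.card = n := by
    rw [← Set.ncard_eq_toFinset_card _ hfin]; exact hcard
  obtain ⟨S, hS, hScard⟩ := Finset.exists_subset_card_eq (hT ▸ hkn)
  have hSfin : Fintype.card S = k := by rw [Fintype.card_coe]; exact hScard
  let e := Fintype.equivFinOfCardEq hSfin
  set M : Fin k → Ideal R := fun i => ((e.symm i : S) : Ideal R) with hM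
  have hMmax : ∀ i, (M i).IsMaximal := by
    intro i
    have h1 : ((e.symm i : S) : Ideal R) ∈ hfin.toFinset := hS (e.symm i).2
    rw [Set.Finite.mem_toFinset] at h1
    exact h1
  have hMinj : Function.Injective M := by
    intro i j h
    exact e.symm.injective (Subtype.ext h)
  set I : Ideal R := ⨅ i, M i with hI
  have hIle : ∀ i, I ≤ M i := fun i => iInf_le _ i
  -- avoidance
  have havoid : ∀ p : Fin k, ∃ a, a ∈ M p ∧ ∀ j, j ≠ p → a ∉ M j := by
    intro p
    by_contra h
    push_neg at h
    have hsub : (M p : Set R) ⊆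
        ⋃ j ∈ ((univ.erase p : Finset (Fin k)) : Set (Fin k)), (M j : Set R) := by
      intro x hx
      obtain ⟨j, hj, hxj⟩ := h x hx
      exact Set.mem_biUnion (by simp [hj]) hxj
    rw [Ideal.subset_union_prime p p (fun i _ _ _ => (hMmax i).isPrime)] at hsub
    obtain ⟨j, hj, hle⟩ := hsub
    have heq : M p = M j := (hMmax p).eq_of_le (hMmax j).ne_top hle
    exact (mem_erase.1 hj).1 (hMinj heq.symm)
  choose a haM haN using havoid
  have hkey : ∀ p : Fin k, ∀ s : Finset (Fin k), p ∉ s → (∏ j ∈ s, a j) ∉ M p := by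
    intro p s hps hmem
    haveI := (hMmax p).isPrime
    obtain ⟨j, hjs, hj⟩ := Ideal.IsPrime.prod_mem_iff.1 hmem
    exact haN j p (fun h => hps (h ▸ hjs)) hj
  have hprod_a : (∏ j, a j) ∈ I := by
    rw [Ideal.mem_iInf]
    intro i
    rw [← Finset.mul_prod_erase _ _ (mem_univ i)]
    exact Ideal.mul_mem_right _ _ (haM i)
  have hk0 : (0 : ℕ) < k := hk1
  have hIne : I ≠ ⊤ := by
    intro h
    exact (hMmax ⟨0, hk0⟩).ne_top (top_le_iff.1 (h ▸ hIle ⟨0, hk0⟩))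
  -- upper bound: I is k-absorbing
  have habs : IsNAbsorbing k I := by
    rw [isNAbsorbing_iff_erase]
    intro x hx
    have hx' : ∀ i : Fin k, ∃ j, x j ∈ M i := by
      intro i
      haveI := (hMmax i).isPrime
      obtain ⟨j, _, hj⟩ := Ideal.IsPrime.prod_mem_iff.1 (hIle i hx)
      exact ⟨j, hj⟩
    choose f hf using hx'
    obtain ⟨p, hp⟩ : ∃ p : Fin (k + 1), p ∉ univ.image f := by
      by_contra h
      push_neg at h
      have h1 : (univ : Finset (Fin (k + 1))).card ≤ (univ.image f).card :=
        card_le_card fun j _ => h j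
      have h2 : (univ.image f).card ≤ (univ : Finset (Fin k)).card := card_image_le
      simp only [card_univ, Fintype.card_fin] at h1 h2
      omega
    refine ⟨p, ?_⟩
    rw [Ideal.mem_iInf]
    intro i
    have hfi : f i ∈ univ.erase p :=
      mem_erase.2 ⟨fun h => hp (h ▸ mem_image_of_mem f (mem_univ i)), mem_univ _⟩
    rw [← Finset.mul_prod_erase _ _ hfi]
    exact Ideal.mul_mem_right _ _ (hf i)
  refine ⟨I, hIne, le_antisymm (sInf_le ⟨k, hk0, rfl, habs⟩) (le_sInf ?_)⟩
  rintro w ⟨m, hm, rfl, habm⟩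
  rw [Nat.cast_le]
  by_contra hlt
  push_neg at hlt
  rw [isNAbsorbing_iff_erase] at habm
  set g : Fin k → Fin (m + 1) := fun j => ⟨min j m, by omega⟩ with hg
  set y : Fin (m + 1) → R := fun i => ∏ j ∈ univ.filter (fun j => g j = i), a j with hy
  have hyprod : ∏ i, y i = ∏ j, a j :=
    Finset.prod_fiberwise_of_maps_to (fun j _ => mem_univ _) a
  obtain ⟨p, hp⟩ := habm y (by rw [hyprod]; exact hprod_a)
  have hrw : ∏ i ∈ univ.erase p, y i = ∏ j ∈ univ.filter (fun j => g j ≠ p), a j := by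
    rw [← Finset.prod_fiberwise_of_maps_to (g := g) (t := univ.erase p)
      (s := univ.filter fun j => g j ≠ p)
      (fun j hj => mem_erase.2 ⟨(mem_filter.1 hj).2, mem_univ _⟩) a]
    refine Finset.prod_congr rfl fun i hi => ?_
    rw [hy]
    refine Finset.prod_congr ?_ fun _ _ => rfl
    ext j
    simp only [mem_filter, mem_univ, true_and]
    constructor
    · intro hgj
      exact ⟨by rw [hgj]; exact (mem_erase.1 hi).1, hgj⟩
    · exact fun h => h.2
  rw [hrw] at hp
  have hpm : (p : ℕ) < k := by omega
  set q : Fin k := ⟨(p : ℕ), hpm⟩ with hq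
  have hgq : g q = p := by
    have hpl : (p : ℕ) ≤ m := Nat.lt_succ_iff.mp p.isLt
    apply Fin.ext
    simp only [hg, hq]
    omega
  have hqnot : q ∉ univ.filter (fun j => g j ≠ p) := by
    simp [hgq]
  exact hkey q _ hqnot (hIle q hp)
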